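/- The power of a cycle C_n^k with 2k + 2 ≤ n ≤ 3k + 1 has biclique-chromatic number exactly 2: colouring one block of k consecutive vertices red and the remaining n - k vertices blue leaves no biclique monochromatic. -/

import Mathlib

open SimpleGraph

/-- The `k`-th power of a path on `n` vertices: `v_i ~ v_j` iff `0 < |i - j| ≤ k`. -/
def pathPower (n k : ℕ) : SimpleGraph (Fin n) :=
  SimpleGraph.fromRel (fun i j => i.val ≤ j.val ∧ j.val ≤ i.val + k)

/-- The cyclic distance between two vertices of `ZMod n`. -/
def cdist (n : ℕ) (i j : ZMod n) : ℕ := min (i - j).val (j - i).val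

/-- The `k`-th power of a cycle on `n` vertices: `v_i ~ v_j` iff the
cyclic distance between `i` and `j` is between `1` and `k`. -/
def cyclePower (n k : ℕ) : SimpleGraph (ZMod n) :=
  SimpleGraph.fromRel (fun i j => cdist n i j ≤ k)

/-- `S` induces a complete bipartite subgraph of `G`. -/
def IsCompleteBipartiteSet {V : Type*} (G : SimpleGraph V) (S : Set V) : Prop :=
  ∃ A B : Set V, A ∪ B = S ∧ Disjoint A B ∧
    (∀ a ∈ A, ∀ b ∈ B, G.Adj a b) ∧
    (∀ a ∈ A, ∀ a' ∈ A, ¬ G.Adj a a') ∧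
    (∀ b ∈ B, ∀ b' ∈ B, ¬ G.Adj b b')

/-- A biclique: a maximal set of vertices inducing a complete bipartite
subgraph with at least one edge. -/
def IsBiclique {V : Type*} (G : SimpleGraph V) (S : Set V) : Prop :=
  IsCompleteBipartiteSet G S ∧ (∃ u ∈ S, ∃ v ∈ S, G.Adj u v) ∧
  ∀ T : Set V, S ⊆ T → IsCompleteBipartiteSet G T → T = S

/-- A set is monochromatic under a colouring. -/
def Monochromatic {V α : Type*} (c : V → α) (S : Set V) : Prop :=
  ∃ a, ∀ v ∈ S, c v = a

/-- `G` admits a biclique-colouring with `m` colours. -/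
def BicliqueColorable {V : Type*} (G : SimpleGraph V) (m : ℕ) : Prop :=
  ∃ c : V → Fin m, ∀ S : Set V, IsBiclique G S → ¬ Monochromatic c S

/-- The biclique-chromatic number. -/
noncomputable def bicliqueChromaticNumber {V : Type*} (G : SimpleGraph V) : ℕ :=
  sInf {m | BicliqueColorable G m}

/-- `a`, `b`, `c` induce a path on three vertices (with middle vertex `b`). -/
def IsInducedP3 {V : Type*} (G : SimpleGraph V) (a b c : V) : Prop :=
  a ≠ b ∧ b ≠ c ∧ a ≠ c ∧ G.Adj a b ∧ G.Adj b c ∧ ¬ G.Adj a c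

/-- `a`, `b`, `c`, `d` induce a four-cycle (in this cyclic order). -/
def IsInducedC4 {V : Type*} (G : SimpleGraph V) (a b c d : V) : Prop :=
  a ≠ b ∧ a ≠ c ∧ a ≠ d ∧ b ≠ c ∧ b ≠ d ∧ c ≠ d ∧
  G.Adj a b ∧ G.Adj b c ∧ G.Adj c d ∧ G.Adj d a ∧ ¬ G.Adj a c ∧ ¬ G.Adj b d


section Aux
variable {n k : ℕ}

private lemma nvcast [NeZero n] (a : ZMod n) : ((a.val : ℕ) : ZMod n) = a :=
  ZMod.natCast_rightInverse a

private lemma val_inj' [NeZero n] {a b : ZMod n} (h : a.val = b.val) : a = b := by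
  rw [← nvcast a, ← nvcast b, h]

private lemma cp_adj [NeZero n] (i j : ZMod n) :
    (cyclePower n k).Adj i j ↔ i ≠ j ∧ min (i - j).val (j - i).val ≤ k := by
  show (i ≠ j ∧ (cdist n i j ≤ k ∨ cdist n j i ≤ k)) ↔ _
  unfold cdist
  rw [min_comm (j - i).val]
  tauto

private lemma val_sub' [NeZero n] (a b : ZMod n) :
    (a - b).val = if b.val ≤ a.val then a.val - b.val else n - (b.val - a.val) := by
  have key : ∀ x y : ZMod n, y.val ≤ x.val → (x - y).val = x.val - y.val := by
    intro x y h
    have e : ((x.val - y.val : ℕ) : ZMod n) = x - y := by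
      rw [Nat.cast_sub h, nvcast, nvcast]
    rw [← e, ZMod.val_natCast,
      Nat.mod_eq_of_lt (lt_of_le_of_lt (Nat.sub_le _ _) (ZMod.val_lt x))]
  split_ifs with h
  · exact key a b h
  · push_neg at h
    have hne : b - a ≠ 0 := by
      intro h0
      have hba : b = a := sub_eq_zero.mp h0
      rw [hba] at h
      exact lt_irrefl _ h
    have h2 : a - b = -(b - a) := by ring
    rw [h2, ZMod.neg_val, if_neg hne, key b a (le_of_lt h)]

private lemma adj_iff [NeZero n] (hkn : k < n) (a b : ZMod n) :
    (cyclePower n k).Adj a b ↔ a.val ≠ b.val ∧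
      ((a.val - b.val ≤ k ∧ b.val - a.val ≤ k) ∨
        n - (a.val - b.val) ≤ k ∨ n - (b.val - a.val) ≤ k) := by
  have hne : (a ≠ b) ↔ a.val ≠ b.val := not_congr ⟨fun h => h ▸ rfl, val_inj'⟩
  rw [cp_adj, hne, val_sub' a b, val_sub' b a]
  have ha := ZMod.val_lt a
  have hb := ZMod.val_lt b
  split_ifs <;> omega

private lemma adj_translate [NeZero n] (x a b : ZMod n) :
    (cyclePower n k).Adj (x + a) (x + b) ↔ (cyclePower n k).Adj a b := by
  rw [cp_adj, cp_adj]
  have e1 : (x + a) - (x + b) = a - b := by ring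
  have e2 : (x + b) - (x + a) = b - a := by ring
  have e3 : (x + a ≠ x + b) ↔ a ≠ b := by simp
  rw [e1, e2, e3]

private lemma adj_add_iff [NeZero n] (hkn : k < n) (x : ZMod n) (c d : ℕ)
    (hc : c < n) (hd : d < n) :
    (cyclePower n k).Adj (x + (c : ZMod n)) (x + (d : ZMod n)) ↔ c ≠ d ∧
      ((c - d ≤ k ∧ d - c ≤ k) ∨ n - (c - d) ≤ k ∨ n - (d - c) ≤ k) := by
  have e1 : ((c : ZMod n)).val = c := by rw [ZMod.val_natCast, Nat.mod_eq_of_lt hc]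
  have e2 : ((d : ZMod n)).val = d := by rw [ZMod.val_natCast, Nat.mod_eq_of_lt hd]
  rw [adj_translate, adj_iff hkn, e1, e2]


private lemma natcast_inj' [NeZero n] {c d : ℕ} (hc : c < n) (hd : d < n)
    (h : (c : ZMod n) = (d : ZMod n)) : c = d := by
  have := congrArg ZMod.val h
  rwa [ZMod.val_natCast, ZMod.val_natCast, Nat.mod_eq_of_lt hc, Nat.mod_eq_of_lt hd] at this

private lemma extend_edge (h1 : 2*k+2 ≤ n) (x y : ZMod n)
    (hxy : (cyclePower n k).Adj x y) :
    ∃ z : ZMod n, (cyclePower n k).Adj z x ∧ ¬ (cyclePower n k).Adj z y ∧ z ≠ y := by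
  haveI : NeZero n := ⟨by omega⟩
  have hkn : k < n := by omega
  have hdn : (y - x).val < n := ZMod.val_lt _
  have hy : y = x + (((y - x).val : ℕ) : ZMod n) := by rw [nvcast]; ring
  have hx : x = x + ((0 : ℕ) : ZMod n) := by simp
  have hxy' : (cyclePower n k).Adj (x + ((0:ℕ) : ZMod n)) (x + (((y-x).val : ℕ) : ZMod n)) := by
    rw [← hx, ← hy]; exact hxy
  rw [adj_add_iff hkn x 0 _ (by omega) hdn] at hxy'
  set d := (y - x).val with hdd
  -- d facts : d ≠ 0 ∧ (d ≤ k ∨ n - d ≤ k)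
  have hfacts : 1 ≤ d ∧ (d ≤ k ∨ n - d ≤ k) := by omega
  rcases le_or_gt d k with hdk | hdk
  · refine ⟨x + ((n + d - (k+1) : ℕ) : ZMod n), ?_, ?_, ?_⟩
    · have := (adj_add_iff hkn x (n + d - (k+1)) 0 (by omega) (by omega)).mpr (by omega)
      rwa [← hx] at this
    · intro hadj
      rw [hy] at hadj
      have := (adj_add_iff hkn x (n + d - (k+1)) d (by omega) hdn).mp hadj
      omega
    · intro heq
      rw [hy] at heq
      have := natcast_inj' (n := n) (by omega) hdn (add_left_cancel heq)
      omega
  · have hnd : n - d ≤ k := by omega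
    refine ⟨x + ((d + (k+1) - n : ℕ) : ZMod n), ?_, ?_, ?_⟩
    · have := (adj_add_iff hkn x (d + (k+1) - n) 0 (by omega) (by omega)).mpr (by omega)
      rwa [← hx] at this
    · intro hadj
      rw [hy] at hadj
      have := (adj_add_iff hkn x (d + (k+1) - n) d (by omega) hdn).mp hadj
      omega
    · intro heq
      rw [hy] at heq
      have := natcast_inj' (n := n) (by omega) hdn (add_left_cancel heq)
      omega

private lemma extend_nonedge (h1 : 2*k+2 ≤ n) (h2 : n ≤ 3*k+1) (x y m : ZMod n)
    (hne : x ≠ y) (hxy : ¬ (cyclePower n k).Adj x y) (hxm : (cyclePower n k).Adj x m) :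
    ∃ z : ZMod n, (cyclePower n k).Adj z x ∧ (cyclePower n k).Adj z y ∧
      ¬ (cyclePower n k).Adj z m ∧ z ≠ m := by
  haveI : NeZero n := ⟨by omega⟩
  have hkn : k < n := by omega
  have hdn : (y - x).val < n := ZMod.val_lt _
  have hen : (m - x).val < n := ZMod.val_lt _
  have hy : y = x + (((y - x).val : ℕ) : ZMod n) := by rw [nvcast]; ring
  have hm : m = x + (((m - x).val : ℕ) : ZMod n) := by rw [nvcast]; ring
  have hx : x = x + ((0 : ℕ) : ZMod n) := by simp
  have hd0 : (y - x).val ≠ 0 := by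
    intro h0
    exact hne (by rw [hy, h0]; simp)
  have hxy' : ¬ (cyclePower n k).Adj (x + ((0:ℕ) : ZMod n)) (x + (((y-x).val : ℕ) : ZMod n)) := by
    rw [← hx, ← hy]; exact hxy
  have hxm' : (cyclePower n k).Adj (x + ((0:ℕ) : ZMod n)) (x + (((m-x).val : ℕ) : ZMod n)) := by
    rw [← hx, ← hm]; exact hxm
  rw [adj_add_iff hkn x 0 _ (by omega) hdn] at hxy'
  rw [adj_add_iff hkn x 0 _ (by omega) hen] at hxm'
  set d := (y - x).val with hdd
  set e := (m - x).val with hee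
  have hdfacts : k + 1 ≤ d ∧ d ≤ n - k - 1 := by omega
  have hefacts : 1 ≤ e ∧ (e ≤ k ∨ n - e ≤ k) := by omega
  -- choose c
  rcases le_or_gt e k with hek | hek
  · -- c = n - s, s = max (max (k+1-e) (n-d-k)) 1
    set s : ℕ := max (max (k+1-e) (n-d-k)) 1 with hs
    have hsk : 1 ≤ s ∧ s ≤ k := by omega
    refine ⟨x + ((n - s : ℕ) : ZMod n), ?_, ?_, ?_, ?_⟩
    · have := (adj_add_iff hkn x (n - s) 0 (by omega) (by omega)).mpr (by omega)
      rwa [← hx] at this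
    · rw [hy]
      exact (adj_add_iff hkn x (n - s) d (by omega) hdn).mpr (by omega)
    · intro hadj
      rw [hm] at hadj
      have := (adj_add_iff hkn x (n - s) e (by omega) hen).mp hadj
      omega
    · intro heq
      rw [hm] at heq
      have := natcast_inj' (n := n) (by omega) hen (add_left_cancel heq)
      omega
  · -- e ≥ n - k ; t = n - e ; c = max (k+1-t) (d-k)
    have ht : 1 ≤ n - e ∧ n - e ≤ k := by omega
    set c : ℕ := max (k+1-(n-e)) (d-k) with hc
    have hck : 1 ≤ c ∧ c ≤ k := by omega
    refine ⟨x + ((c : ℕ) : ZMod n), ?_, ?_, ?_, ?_⟩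
    · have := (adj_add_iff hkn x c 0 (by omega) (by omega)).mpr (by omega)
      rwa [← hx] at this
    · rw [hy]
      exact (adj_add_iff hkn x c d (by omega) hdn).mpr (by omega)
    · intro hadj
      rw [hm] at hadj
      have := (adj_add_iff hkn x c e (by omega) hen).mp hadj
      omega
    · intro heq
      rw [hm] at heq
      have := natcast_inj' (n := n) (by omega) hen (add_left_cancel heq)
      omega

private lemma no_three (h1 : 2*k+2 ≤ n) (h2 : n ≤ 3*k+1) (x y z : ZMod n)
    (hxy : x ≠ y) (hyz : y ≠ z) (hxz : x ≠ z)
    (n1 : ¬ (cyclePower n k).Adj x y) (n2 : ¬ (cyclePower n k).Adj y z)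
    (n3 : ¬ (cyclePower n k).Adj x z) : False := by
  haveI : NeZero n := ⟨by omega⟩
  have hkn : k < n := by omega
  rw [adj_iff hkn] at n1 n2 n3
  have e1 : x.val ≠ y.val := fun h => hxy (val_inj' h)
  have e2 : y.val ≠ z.val := fun h => hyz (val_inj' h)
  have e3 : x.val ≠ z.val := fun h => hxz (val_inj' h)
  have := ZMod.val_lt x; have := ZMod.val_lt y; have := ZMod.val_lt z
  omega

private lemma no_blue_c4 (h1 : 2*k+2 ≤ n) (h2 : n ≤ 3*k+1) (p q r s : ZMod n)
    (hp : k ≤ p.val) (hq : k ≤ q.val) (hr : k ≤ r.val) (hs : k ≤ s.val)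
    (hpq : p ≠ q) (hrs : r ≠ s)
    (npq : ¬ (cyclePower n k).Adj p q) (nrs : ¬ (cyclePower n k).Adj r s)
    (a1 : (cyclePower n k).Adj p r) (a2 : (cyclePower n k).Adj p s)
    (a3 : (cyclePower n k).Adj q r) (a4 : (cyclePower n k).Adj q s) : False := by
  haveI : NeZero n := ⟨by omega⟩
  have hkn : k < n := by omega
  rw [adj_iff hkn] at npq nrs a1 a2 a3 a4
  have e1 : p.val ≠ q.val := fun h => hpq (val_inj' h)
  have e2 : r.val ≠ s.val := fun h => hrs (val_inj' h)
  have := ZMod.val_lt p; have := ZMod.val_lt q; have := ZMod.val_lt r; have := ZMod.val_lt s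
  omega

private lemma not_max_pair (h1 : 2*k+2 ≤ n) (S : Set (ZMod n)) (u v : ZMod n)
    (huv : (cyclePower n k).Adj u v) (hSeq : S = {u, v})
    (hmax : ∀ T : Set (ZMod n), S ⊆ T → IsCompleteBipartiteSet (cyclePower n k) T → T = S) :
    False := by
  obtain ⟨z, hz1, hz2, hz3⟩ := extend_edge h1 u v huv
  have hzu : z ≠ u := hz1.ne
  have hT : IsCompleteBipartiteSet (cyclePower n k) (insert z S) := by
    refine ⟨{u}, {v, z}, ?_, ?_, ?_, ?_, ?_⟩
    · rw [hSeq]; ext w; simp; tauto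
    · rw [Set.disjoint_left]
      rintro w rfl
      simp only [Set.mem_insert_iff, Set.mem_singleton_iff]
      push_neg
      exact ⟨huv.ne, hzu.symm⟩
    · rintro a rfl b hb
      rcases hb with rfl | rfl
      · exact huv
      · exact hz1.symm
    · rintro a rfl b rfl
      exact (cyclePower n k).irrefl
    · rintro b hb b' hb'
      rcases hb with rfl | rfl <;> rcases hb' with rfl | rfl
      · exact (cyclePower n k).irrefl
      · exact fun h => hz2 h.symm
      · exact hz2
      · exact (cyclePower n k).irrefl
  have heq := hmax _ (Set.subset_insert z S) hT
  have hzS : z ∈ S := heq ▸ Set.mem_insert z S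
  rw [hSeq] at hzS
  rcases hzS with rfl | rfl
  · exact hzu rfl
  · exact hz3 rfl

private lemma core_lemma (h1 : 2*k+2 ≤ n) (h2 : n ≤ 3*k+1)
    (S A B : Set (ZMod n))
    (hUn : A ∪ B = S) (hDis : Disjoint A B)
    (hcross : ∀ a ∈ A, ∀ b ∈ B, (cyclePower n k).Adj a b)
    (hA : ∀ a ∈ A, ∀ a' ∈ A, ¬ (cyclePower n k).Adj a a')
    (hB : ∀ b ∈ B, ∀ b' ∈ B, ¬ (cyclePower n k).Adj b b')
    (hmax : ∀ T : Set (ZMod n), S ⊆ T → IsCompleteBipartiteSet (cyclePower n k) T → T = S)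
    (u : ZMod n) (hu : u ∈ A) (v : ZMod n) (hv : v ∈ B)
    (a : Bool) (ha : ∀ w ∈ S, decide (w.val < k) = a) : False := by
  haveI : NeZero n := ⟨by omega⟩
  have hkn : k < n := by omega
  have huv : (cyclePower n k).Adj u v := hcross u hu v hv
  have hAS : ∀ w ∈ A, w ∈ S := fun w hw => hUn ▸ Set.mem_union_left B hw
  have hBS : ∀ w ∈ B, w ∈ S := fun w hw => hUn ▸ Set.mem_union_right A hw
  -- each part has at most two elements
  have hA2 : ∀ p ∈ A, ∀ q ∈ A, p ≠ q → ∀ w ∈ A, w = p ∨ w = q := by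
    intro p hp q hq hpq w hw
    by_contra hc
    push_neg at hc
    exact no_three h1 h2 w p q hc.1 hpq hc.2 (hA w hw p hp) (hA p hp q hq) (hA w hw q hq)
  have hB2 : ∀ p ∈ B, ∀ q ∈ B, p ≠ q → ∀ w ∈ B, w = p ∨ w = q := by
    intro p hp q hq hpq w hw
    by_contra hc
    push_neg at hc
    exact no_three h1 h2 w p q hc.1 hpq hc.2 (hB w hw p hp) (hB p hp q hq) (hB w hw q hq)
  by_cases hAex : ∃ u' ∈ A, u' ≠ u
  · obtain ⟨u', hu', huu⟩ := hAex
    by_cases hBex : ∃ v' ∈ B, v' ≠ v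
    · -- both parts have two elements: C4
      obtain ⟨v', hv', hvv⟩ := hBex
      cases a with
      | true =>
        -- all red: u and u' would be adjacent
        have r1 : u.val < k := by have := ha u (hAS u hu); simpa using this
        have r2 : u'.val < k := by have := ha u' (hAS u' hu'); simpa using this
        have : (cyclePower n k).Adj u' u := by
          rw [adj_iff hkn]
          refine ⟨fun h => huu (val_inj' h), by omega⟩
        exact hA u' hu' u hu this
      | false =>
        have b1 : k ≤ u.val := by have := ha u (hAS u hu); simpa using this
        have b2 : k ≤ u'.val := by have := ha u' (hAS u' hu'); simpa using this
        have b3 : k ≤ v.val := by have := ha v (hBS v hv); simpa using this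
        have b4 : k ≤ v'.val := by have := ha v' (hBS v' hv'); simpa using this
        exact no_blue_c4 h1 h2 u u' v v' b1 b2 b3 b4 (Ne.symm huu) (Ne.symm hvv)
          (hA u hu u' hu')
          (hB v hv v' hv') (hcross u hu v hv) (hcross u hu v' hv')
          (hcross u' hu' v hv) (hcross u' hu' v' hv')
    · -- A has two, B = {v}
      push_neg at hBex
      have hwA : ∀ w ∈ A, w = u ∨ w = u' := hA2 u hu u' hu' (Ne.symm huu)
      obtain ⟨z, hz1, hz2, hz3, hz4⟩ :=
        extend_nonedge h1 h2 u u' v (Ne.symm huu) (hA u hu u' hu') (hcross u hu v hv)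
      have hzA : z ∉ A := fun h => hA z h u hu hz1
      have hzS : z ∉ S := by
        intro h
        rw [← hUn] at h
        rcases h with h | h
        · exact hzA h
        · exact hz4 (hBex z h)
      have hT : IsCompleteBipartiteSet (cyclePower n k) (insert z S) := by
        refine ⟨A, insert z B, ?_, ?_, ?_, hA, ?_⟩
        · rw [Set.union_insert, hUn]
        · rw [Set.disjoint_left]
          intro w hw hmem
          rcases hmem with rfl | hmem
          · exact hzA hw
          · exact Set.disjoint_left.mp hDis hw hmem
        · intro p hp q hq
          rcases hq with rfl | hq
          · rcases hwA p hp with rfl | rfl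
            · exact hz1.symm
            · exact hz2.symm
          · exact hcross p hp q hq
        · intro p hp q hq
          rcases hp with rfl | hp <;> rcases hq with rfl | hq
          · exact (cyclePower n k).irrefl
          · rw [hBex q hq]; exact hz3
          · rw [hBex p hp]; exact fun h => hz3 h.symm
          · exact hB p hp q hq
      have heq := hmax _ (Set.subset_insert z S) hT
      exact hzS (heq ▸ Set.mem_insert z S)
  · push_neg at hAex
    by_cases hBex : ∃ v' ∈ B, v' ≠ v
    · -- B has two, A = {u}
      obtain ⟨v', hv', hvv⟩ := hBex
      have hwB : ∀ w ∈ B, w = v ∨ w = v' := hB2 v hv v' hv' (Ne.symm hvv)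
      obtain ⟨z, hz1, hz2, hz3, hz4⟩ :=
        extend_nonedge h1 h2 v v' u (Ne.symm hvv) (hB v hv v' hv') huv.symm
      have hzB : z ∉ B := fun h => hB z h v hv hz1
      have hzS : z ∉ S := by
        intro h
        rw [← hUn] at h
        rcases h with h | h
        · exact hz4 (hAex z h)
        · exact hzB h
      have hT : IsCompleteBipartiteSet (cyclePower n k) (insert z S) := by
        refine ⟨insert z A, B, ?_, ?_, ?_, ?_, hB⟩
        · rw [Set.insert_union, hUn]
        · rw [Set.disjoint_left]
          intro w hw hmem
          rcases hw with rfl | hw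
          · exact hzB hmem
          · exact Set.disjoint_left.mp hDis hw hmem
        · intro p hp q hq
          rcases hp with rfl | hp
          · rcases hwB q hq with rfl | rfl
            · exact hz1
            · exact hz2
          · exact hcross p hp q hq
        · intro p hp q hq
          rcases hp with rfl | hp <;> rcases hq with rfl | hq
          · exact (cyclePower n k).irrefl
          · rw [hAex q hq]; exact hz3
          · rw [hAex p hp]; exact fun h => hz3 h.symm
          · exact hA p hp q hq
      have heq := hmax _ (Set.subset_insert z S) hT
      exact hzS (heq ▸ Set.mem_insert z S)
    · -- S = {u, v}
      push_neg at hBex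
      have hSeq : S = {u, v} := by
        rw [← hUn]
        ext w
        simp only [Set.mem_union, Set.mem_insert_iff, Set.mem_singleton_iff]
        constructor
        · rintro (h | h)
          · exact Or.inl (hAex w h)
          · exact Or.inr (hBex w h)
        · rintro (rfl | rfl)
          · exact Or.inl hu
          · exact Or.inr hv
      exact not_max_pair h1 S u v huv hSeq hmax

private lemma no_mono (h1 : 2*k+2 ≤ n) (h2 : n ≤ 3*k+1) (S : Set (ZMod n))
    (hS : IsBiclique (cyclePower n k) S) :
    ¬ Monochromatic (fun i : ZMod n => decide (i.val < k)) S := by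
  rintro ⟨a, ha⟩
  obtain ⟨⟨A, B, hUn, hDis, hcross, hA, hB⟩, ⟨u, hu, v, hv, huv⟩, hmax⟩ := hS
  have hu' : u ∈ A ∪ B := hUn ▸ hu
  have hv' : v ∈ A ∪ B := hUn ▸ hv
  rcases hu' with huA | huB <;> rcases hv' with hvA | hvB
  · exact hA u huA v hvA huv
  · exact core_lemma h1 h2 S A B hUn hDis hcross hA hB hmax u huA v hvB a ha
  · exact core_lemma h1 h2 S B A (by rw [Set.union_comm]; exact hUn) hDis.symm
      (fun b hb a' ha' => (hcross a' ha' b hb).symm) hB hA hmax u huB v hvA a ha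
  · exact hB u huB v hvB huv

private lemma exists_biclique (h1 : 2*k+2 ≤ n) (h2 : n ≤ 3*k+1) :
    ∃ S : Set (ZMod n), IsBiclique (cyclePower n k) S := by
  haveI : NeZero n := ⟨by omega⟩
  haveI : Fact (1 < n) := ⟨by omega⟩
  have hkn : k < n := by omega
  have h01 : (cyclePower n k).Adj 0 1 := by
    rw [adj_iff hkn]
    rw [ZMod.val_zero, ZMod.val_one]
    omega
  have hCBS : IsCompleteBipartiteSet (cyclePower n k) {(0 : ZMod n), 1} := by
    refine ⟨{0}, {1}, by rw [Set.singleton_union], ?_, ?_, ?_, ?_⟩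
    · simp [Set.disjoint_singleton, h01.ne]
    · rintro a rfl b rfl; exact h01
    · rintro a rfl b rfl; exact (cyclePower n k).irrefl
    · rintro a rfl b rfl; exact (cyclePower n k).irrefl
  set F : Set (Set (ZMod n)) :=
    {T | ({(0 : ZMod n), 1} : Set (ZMod n)) ⊆ T ∧ IsCompleteBipartiteSet (cyclePower n k) T}
    with hF
  have hFne : F.Nonempty := ⟨{(0 : ZMod n), 1}, subset_rfl, hCBS⟩
  obtain ⟨M, hM, hMmax⟩ := Set.Finite.exists_maximalFor id F (Set.toFinite F) hFne
  refine ⟨M, hM.2, ⟨0, hM.1 (by simp), 1, hM.1 (by simp), h01⟩, ?_⟩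
  intro T hMT hT
  exact Set.Subset.antisymm (hMmax ⟨hM.1.trans hMT, hT⟩ hMT) hMT


/-- `C_n^k` with `2k + 2 ≤ n ≤ 3k + 1` has biclique-chromatic number exactly 2;
colouring a block of `k` consecutive vertices with one colour and the remaining
`n - k` vertices with the other leaves no biclique monochromatic. -/
theorem stmt_12 (n k : ℕ) (h1 : 2 * k + 2 ≤ n) (h2 : n ≤ 3 * k + 1) :
    bicliqueChromaticNumber (cyclePower n k) = 2 ∧
    (∀ S : Set (ZMod n), IsBiclique (cyclePower n k) S →
      ¬ Monochromatic (fun i : ZMod n => decide (i.val < k)) S) := by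
  have hmain := fun S hS => no_mono (n := n) (k := k) h1 h2 S hS
  refine ⟨?_, hmain⟩
  have hcol2 : BicliqueColorable (cyclePower n k) 2 := by
    refine ⟨fun i => if i.val < k then 0 else 1, ?_⟩
    rintro S hS ⟨a, ha⟩
    fin_cases a
    · exact hmain S hS ⟨true, fun w hw => by
        have := ha w hw
        simp only at this
        split_ifs at this with h
        · simp [h]
        · exact absurd this (by decide)⟩
    · exact hmain S hS ⟨false, fun w hw => by
        have := ha w hw
        simp only at this
        split_ifs at this with h
        · exact absurd this (by decide)
        · simp [h]⟩
  have h0 : ¬ BicliqueColorable (cyclePower n k) 0 := by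
    rintro ⟨c, -⟩
    exact (c 0).elim0
  have h1' : ¬ BicliqueColorable (cyclePower n k) 1 := by
    rintro ⟨c, hc⟩
    obtain ⟨M, hM⟩ := exists_biclique (n := n) (k := k) h1 h2
    exact hc M hM ⟨0, fun w _ => Subsingleton.elim _ _⟩
  have hne : {m | BicliqueColorable (cyclePower n k) m}.Nonempty := ⟨2, hcol2⟩
  have hmem := Nat.sInf_mem hne
  unfold bicliqueChromaticNumber
  have hle : sInf {m | BicliqueColorable (cyclePower n k) m} ≤ 2 := Nat.sInf_le hcol2
  interval_cases h : sInf {m | BicliqueColorable (cyclePower n k) m}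
  · exact absurd hmem h0
  · exact absurd hmem h1'
  · rfl
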